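/- Fix a rational q with 1 < q < 2, let M_q = ⟨[1,q] ∩ ℚ⟩ ⊆ ℚ_{≥0}, and let c = ⌈1/(q−1)⌉. Then for every atom a of M_q (i.e., every a ∈ [1,q] ∩ ℚ), the omega-primality of a equals c + ⌈a⌉. In particular, ω(M_q) = c + 2 < ∞. -/

import Mathlib

set_option maxHeartbeats 1000000

/-- The Puiseux monoid generated by `[1, q] ∩ ℚ`. -/
def Mq (q : ℚ) : AddSubmonoid ℚ := AddSubmonoid.closure {x : ℚ | 1 ≤ x ∧ x ≤ q}

/-- `a` is an atom of the submonoid `M` of ℚ. -/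
def IsAtomOfQ (M : AddSubmonoid ℚ) (a : ℚ) : Prop :=
  a ∈ M ∧ a ≠ 0 ∧ ∀ b c : ℚ, b ∈ M → c ∈ M → a = b + c → b = 0 ∨ c = 0

/-- Divisibility in the submonoid `M`. -/
def DvdMQ (M : AddSubmonoid ℚ) (x y : ℚ) : Prop := ∃ z ∈ M, y = x + z

/-- `ω(a) ≤ n`: whenever `a` divides a sum of atoms, it divides a subsum of at most `n`
of them. -/
def OmegaLe (M : AddSubmonoid ℚ) (a : ℚ) (n : ℕ) : Prop :=
  ∀ T : Multiset ℚ, (∀ b ∈ T, IsAtomOfQ M b) → DvdMQ M a T.sum →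
    ∃ S ≤ T, Multiset.card S ≤ n ∧ DvdMQ M a S.sum

lemma mem_of_interval {q : ℚ} {x : ℚ} {k : ℕ} (hk : 1 ≤ k) (hkx : (k:ℚ) ≤ x)
    (hxk : x ≤ k * q) : x ∈ Mq q := by
  have hk0 : (0:ℚ) < k := by exact_mod_cast hk
  have hgen : x / k ∈ {x : ℚ | 1 ≤ x ∧ x ≤ q} :=
    ⟨(one_le_div hk0).2 hkx, (div_le_iff₀ hk0).2 (by linarith [mul_comm (k:ℚ) q])⟩
  have hmem : x / k ∈ Mq q := AddSubmonoid.subset_closure hgen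
  have hx : x = k • (x / k) := by
    simp [nsmul_eq_mul]; field_simp
  rw [hx]
  exact (Mq q).nsmul_mem hmem k

lemma Mq_mem_iff {q : ℚ} {x : ℚ} :
    x ∈ Mq q ↔ x = 0 ∨ ∃ k : ℕ, 1 ≤ k ∧ (k:ℚ) ≤ x ∧ x ≤ k * q := by
  constructor
  · intro hx
    induction hx using AddSubmonoid.closure_induction with
    | mem y hy => exact Or.inr ⟨1, le_refl 1, by simpa using hy.1, by simpa using hy.2⟩
    | zero => exact Or.inl rfl
    | add x y hx hy ihx ihy =>
      rcases ihx with rfl | ⟨k, hk, hkx, hxk⟩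
      · simpa using ihy
      rcases ihy with rfl | ⟨l, hl, hly, hyl⟩
      · exact Or.inr ⟨k, hk, by simpa using hkx, by simpa using hxk⟩
      · exact Or.inr ⟨k + l, by omega, by push_cast; linarith, by push_cast; linarith⟩
  · rintro (rfl | ⟨k, hk, hkx, hxk⟩)
    · exact (Mq q).zero_mem
    · exact mem_of_interval hk hkx hxk

lemma one_le_of_mem {q : ℚ} {x : ℚ} (hx : x ∈ Mq q) (hx0 : x ≠ 0) : 1 ≤ x := by
  rcases Mq_mem_iff.mp hx with rfl | ⟨k, hk, hkx, _⟩
  · exact absurd rfl hx0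
  · calc (1:ℚ) ≤ k := by exact_mod_cast hk
      _ ≤ x := hkx

lemma mem_of_ge {q : ℚ} {c : ℕ} (hq : 1 < q) (hcq : 1 ≤ (c:ℚ) * (q - 1)) {x : ℚ}
    (hx : (c:ℚ) ≤ x) : x ∈ Mq q := by
  have hc1 : 1 ≤ c := by
    by_contra h
    interval_cases c <;> simp_all <;> linarith
  set k : ℕ := ⌊x⌋.toNat with hk
  have hfl : (c:ℤ) ≤ ⌊x⌋ := by
    rw [Int.le_floor]; exact_mod_cast hx
  have hk0 : 1 ≤ k := by omega
  have hkx : (k:ℚ) ≤ x := by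
    have : ((k:ℤ):ℚ) ≤ x := by
      rw [hk, Int.toNat_of_nonneg (by omega)]; exact Int.floor_le x
    exact_mod_cast this
  have hck : (c:ℚ) ≤ (k:ℚ) := by exact_mod_cast (by omega : (c:ℤ) ≤ (k:ℤ))
  have hxk1 : x < (k:ℚ) + 1 := by
    have : x < ((k:ℤ):ℚ) + 1 := by
      rw [hk, Int.toNat_of_nonneg (by omega)]; exact Int.lt_floor_add_one x
    exact_mod_cast this
  have : x ≤ k * q := by nlinarith
  exact Mq_mem_iff.mpr (Or.inr ⟨k, hk0, hkx, this⟩)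

lemma atom_of_Icc {q : ℚ} (h1 : 1 < q) (h2 : q < 2) {a : ℚ} (ha1 : 1 ≤ a) (ha2 : a ≤ q) :
    IsAtomOfQ (Mq q) a := by
  refine ⟨AddSubmonoid.subset_closure ⟨ha1, ha2⟩, by linarith, ?_⟩
  intro b c hb hc habc
  by_contra h
  push_neg at h
  obtain ⟨hb0, hc0⟩ := h
  have hb1 := one_le_of_mem hb hb0
  have hc1 := one_le_of_mem hc hc0
  linarith

lemma Icc_of_atom {q : ℚ} {a : ℚ} (ha : IsAtomOfQ (Mq q) a) :
    1 ≤ a ∧ a ≤ q := by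
  obtain ⟨hmem, hne, hatom⟩ := ha
  rcases Mq_mem_iff.mp hmem with rfl | ⟨k, hk, hka, hak⟩
  · exact absurd rfl hne
  rcases Nat.lt_or_ge k 2 with hk2 | hk2
  · have : k = 1 := by omega
    subst this
    constructor
    · exact_mod_cast hka
    · simpa using hak
  · exfalso
    have hk0 : (0:ℚ) < k := by positivity
    have h1k : (1:ℚ) ≤ a / k := (one_le_div hk0).2 hka
    have hqk : a / k ≤ q := (div_le_iff₀ hk0).2 (by linarith [mul_comm (k:ℚ) q])
    have hb : a / k ∈ Mq q := AddSubmonoid.subset_closure ⟨h1k, hqk⟩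
    have hkey : a - a / k = ((k:ℚ) - 1) * (a / k) := by field_simp
    have hcast : ((k - 1 : ℕ):ℚ) = (k:ℚ) - 1 := by
      push_cast [Nat.cast_sub (by omega : 1 ≤ k)]; ring
    have hc' : a - a / k ∈ Mq q := by
      apply Mq_mem_iff.mpr
      refine Or.inr ⟨k - 1, by omega, ?_, ?_⟩
      · rw [hcast, hkey]; nlinarith
      · rw [hcast, hkey]; nlinarith
    rcases hatom (a/k) (a - a/k) hb hc' (by ring) with h | h
    · linarith
    · rw [hkey] at h
      rcases mul_eq_zero.mp h with h | h
      · have : (k:ℚ) ≥ 2 := by exact_mod_cast hk2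
        linarith
      · linarith

lemma omega_mono {M : AddSubmonoid ℚ} {a : ℚ} {m n : ℕ} (hmn : m ≤ n)
    (h : OmegaLe M a m) : OmegaLe M a n := by
  intro T hT hd
  obtain ⟨S, hS, hcard, hd'⟩ := h T hT hd
  exact ⟨S, hS, le_trans hcard hmn, hd'⟩

lemma exists_le_card {α : Type*} {T : Multiset α} {n : ℕ} (h : n ≤ Multiset.card T) :
    ∃ S ≤ T, Multiset.card S = n := by
  refine ⟨(T.toList.take n : List α), ?_, ?_⟩
  · conv_rhs => rw [← Multiset.coe_toList T]
    exact Multiset.coe_le.mpr (T.toList.take_sublist n).subperm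
  · simp only [Multiset.coe_card, List.length_take, Multiset.length_toList]
    omega

lemma omega_upper {q : ℚ} {c : ℕ} (hq : 1 < q) (hcq : 1 ≤ (c:ℚ) * (q - 1))
    {a : ℚ} {N : ℕ} (hN : (c:ℚ) + a ≤ N) : OmegaLe (Mq q) a N := by
  intro T hT hd
  rcases le_or_gt (Multiset.card T) N with h | h
  · exact ⟨T, le_refl T, h, hd⟩
  · obtain ⟨S, hS, hcard⟩ := exists_le_card h.le
    have hsum : (N:ℚ) ≤ S.sum := by
      have h1 : ∀ x ∈ S, (1:ℚ) ≤ x := by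
        intro x hx
        obtain ⟨hm, hne, -⟩ := hT x (Multiset.mem_of_le hS hx)
        exact one_le_of_mem hm hne
      have := Multiset.card_nsmul_le_sum h1
      rw [hcard] at this
      simpa using this
    refine ⟨S, hS, hcard.le, S.sum - a, mem_of_ge hq hcq (by linarith), by ring⟩

lemma not_omega_of_replicate {q : ℚ} {a b : ℚ} {n : ℕ} (hb : IsAtomOfQ (Mq q) b)
    (htot : DvdMQ (Mq q) a (((n:ℚ)+1) * b))
    (hnot : ∀ j : ℕ, j ≤ n → ¬ DvdMQ (Mq q) a ((j:ℚ) * b)) :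
    ¬ OmegaLe (Mq q) a n := by
  intro h
  obtain ⟨S, hS, hcard, hd⟩ := h (Multiset.replicate (n+1) b)
    (fun x hx => by rw [Multiset.eq_of_mem_replicate hx]; exact hb)
    (by rw [Multiset.sum_replicate, nsmul_eq_mul]; push_cast; exact htot)
  have hSrep : S = Multiset.replicate (Multiset.card S) b :=
    Multiset.eq_replicate_card.mpr
      (fun x hx => Multiset.eq_of_mem_replicate (Multiset.mem_of_le hS hx))
  apply hnot _ hcard
  rw [hSrep, Multiset.sum_replicate, nsmul_eq_mul] at hd
  exact hd

lemma cancel_pos {x y d : ℚ} (hd : 0 < d) (h : x * d < y * d) : x < y :=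
  lt_of_mul_lt_mul_right h hd.le

lemma not_omega_one {q : ℚ} (h1 : 1 < q) (h2 : q < 2) {c : ℕ} (hc2 : 2 ≤ c)
    (hcq1 : 1 ≤ (c:ℚ) * (q - 1)) (hcq2 : (c:ℚ) * (q - 1) < q) :
    ¬ OmegaLe (Mq q) (1:ℚ) c := by
  have hc0 : (0:ℚ) < c := by positivity
  have hc2' : (2:ℚ) ≤ c := by exact_mod_cast hc2
  set nL : ℚ := (q*c - q + 1)*(c+1) with hnL
  set nU : ℚ := min (((c:ℚ)+1)^2) (((c:ℚ)*q+1)*c) with hnU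
  set D : ℚ := 2*(c:ℚ)*((c:ℚ)+1) with hD
  have hD0 : (0:ℚ) < D := by rw [hD]; positivity
  obtain ⟨b, hbD⟩ : ∃ b : ℚ, b * D = nL + nU := ⟨(nL + nU)/D, by field_simp⟩
  have hnLU : nL < nU := by
    rw [hnU]
    apply lt_min
    · rw [hnL]; nlinarith
    · rw [hnL]; nlinarith
  have hU1 : nU ≤ ((c:ℚ)+1)^2 := min_le_left _ _
  have hU2 : nU ≤ ((c:ℚ)*q+1)*c := min_le_right _ _
  have hbL : 2*nL < b*D := by rw [hbD]; linarith
  have hbU : b*D < 2*nU := by rw [hbD]; linarith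
  -- facts about b
  have f1 : 1 < b := by
    refine cancel_pos hD0 ?_
    have : 1*D ≤ 2*nL := by rw [hD, hnL]; nlinarith
    linarith
  have f2 : b ≤ q := by
    refine le_of_lt (cancel_pos hD0 ?_)
    have : 2*nU ≤ q*D := by
      rw [hD]
      nlinarith [hU1]
    linarith
  have f3 : (c:ℚ)*(b-1) < 1 := by
    refine cancel_pos (show (0:ℚ) < 2*((c:ℚ)+1) by positivity) ?_
    have he : (c:ℚ)*(b-1) * (2*((c:ℚ)+1)) = b*D - 2*(c:ℚ)*((c:ℚ)+1) := by rw [hD]; ring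
    rw [he]
    nlinarith [hbU, hU1]
  have f4 : (c:ℚ)*(q-b) < q - 1 := by
    refine cancel_pos (show (0:ℚ) < 2*((c:ℚ)+1) by positivity) ?_
    have he : (c:ℚ)*(q-b) * (2*((c:ℚ)+1)) = 2*(c:ℚ)*((c:ℚ)+1)*q - b*D*1 := by rw [hD]; ring
    rw [he]
    nlinarith [hbL]
  have f5 : ((c:ℚ)+1)*b ≤ (c:ℚ)*q + 1 := by
    refine le_of_lt (cancel_pos (show (0:ℚ) < 2*(c:ℚ) by positivity) ?_)
    have he : ((c:ℚ)+1)*b * (2*(c:ℚ)) = b*D := by rw [hD]; ring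
    rw [he]
    nlinarith [hbU, hU2]
  have hatom : IsAtomOfQ (Mq q) b := atom_of_Icc h1 h2 f1.le f2
  apply not_omega_of_replicate hatom
  · refine ⟨((c:ℚ)+1)*b - 1, ?_, by ring⟩
    apply Mq_mem_iff.mpr
    refine Or.inr ⟨c, by omega, by nlinarith, by nlinarith⟩
  · intro j hj hdvd
    obtain ⟨z, hz, he⟩ := hdvd
    have hz' : z = (j:ℚ)*b - 1 := by linarith
    subst hz'
    have hjc : (j:ℚ) ≤ c := by exact_mod_cast hj
    have hj0 : (0:ℚ) ≤ j := by positivity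
    have key1 : (j:ℚ)*b - 1 < j := by
      nlinarith [f3, mul_nonneg (show (0:ℚ) ≤ (c:ℚ) - j by linarith) (show (0:ℚ) ≤ b - 1 by linarith)]
    have key2 : ((j:ℚ)-1)*q < (j:ℚ)*b - 1 := by
      nlinarith [f4, mul_nonneg (show (0:ℚ) ≤ (c:ℚ) - j by linarith) (show (0:ℚ) ≤ q - b by linarith)]
    rcases Mq_mem_iff.mp hz with h0 | ⟨k, hk1, hkz, hzk⟩
    · -- j*b - 1 = 0
      rcases Nat.eq_zero_or_pos j with rfl | hj1
      · norm_num at h0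
      · have hj1' : (1:ℚ) ≤ j := by exact_mod_cast hj1
        nlinarith [mul_nonneg (show (0:ℚ) ≤ (j:ℚ)-1 by linarith) (show (0:ℚ) ≤ b - 1 by linarith)]
    · rcases le_or_gt j k with h | h
      · have : (j:ℚ) ≤ k := by exact_mod_cast h
        linarith
      · have hkj : (k:ℚ) ≤ (j:ℚ) - 1 := by
          have : (k:ℚ) + 1 ≤ j := by exact_mod_cast h
          linarith
        nlinarith [mul_nonneg (show (0:ℚ) ≤ ((j:ℚ)-1) - k by linarith) (show (0:ℚ) ≤ q by linarith)]

lemma not_omega_gt {q : ℚ} (h1 : 1 < q) (h2 : q < 2) {c : ℕ} (hc2 : 2 ≤ c)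
    (hcq1 : 1 ≤ (c:ℚ) * (q - 1)) (hcq2 : (c:ℚ) * (q - 1) < q)
    {a : ℚ} (ha1 : 1 < a) (ha2 : a ≤ q) :
    ¬ OmegaLe (Mq q) a (c+1) := by
  have hc0 : (0:ℚ) < c := by positivity
  have hc2' : (2:ℚ) ≤ c := by exact_mod_cast hc2
  set nL : ℚ := max ((((c:ℚ)-1)*q + a)*((c:ℚ)+2)) (((c:ℚ)+1+a)*((c:ℚ)+1)) with hnL
  set nU : ℚ := ((c:ℚ)+a)*((c:ℚ)+2) with hnU
  set D : ℚ := 2*((c:ℚ)+1)*((c:ℚ)+2) with hD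
  have hD0 : (0:ℚ) < D := by rw [hD]; positivity
  obtain ⟨b, hbD⟩ : ∃ b : ℚ, b * D = nL + nU := ⟨(nL + nU)/D, by field_simp⟩
  have hnLU : nL < nU := by
    rw [hnL]
    apply max_lt
    · rw [hnU]; nlinarith
    · rw [hnU]; nlinarith
  have hL1 : (((c:ℚ)-1)*q + a)*((c:ℚ)+2) ≤ nL := le_max_left _ _
  have hL2 : (((c:ℚ)+1+a))*((c:ℚ)+1) ≤ nL := le_max_right _ _
  have hbL : 2*nL < b*D := by rw [hbD]; linarith
  have hbU : b*D < 2*nU := by rw [hbD]; linarith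
  have g1 : 1 < b := by
    refine cancel_pos hD0 ?_
    have : 1*D < 2*nL := by
      rw [hD]; nlinarith [hL2]
    linarith
  have g2 : b ≤ q := by
    refine le_of_lt (cancel_pos hD0 ?_)
    have : 2*nU ≤ q*D := by rw [hD, hnU]; nlinarith
    linarith
  have g3 : ((c:ℚ)+1)*(b-1) < a - 1 := by
    refine cancel_pos (show (0:ℚ) < 2*((c:ℚ)+2) by positivity) ?_
    have he : ((c:ℚ)+1)*(b-1) * (2*((c:ℚ)+2)) = b*D - D := by rw [hD]; ring
    rw [he]
    have : 2*nU - D = (a-1)*(2*((c:ℚ)+2)) := by rw [hnU, hD]; ring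
    linarith
  have g4 : ((c:ℚ)+1)*(q-b) < 2*q - a := by
    refine cancel_pos (show (0:ℚ) < 2*((c:ℚ)+2) by positivity) ?_
    have he : ((c:ℚ)+1)*(q-b) * (2*((c:ℚ)+2)) = q*D - b*D := by rw [hD]; ring
    rw [he]
    have h' : q*D - 2*((((c:ℚ)-1)*q + a)*((c:ℚ)+2)) = (2*q-a)*(2*((c:ℚ)+2)) := by rw [hD]; ring
    nlinarith [hL1]
  have g5a : (c:ℚ)+1+a < ((c:ℚ)+2)*b := by
    refine cancel_pos (show (0:ℚ) < 2*((c:ℚ)+1) by positivity) ?_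
    have he : ((c:ℚ)+2)*b * (2*((c:ℚ)+1)) = b*D := by rw [hD]; ring
    rw [he]
    nlinarith [hL2]
  have g5b : ((c:ℚ)+2)*b ≤ ((c:ℚ)+1)*q + a := by
    refine le_of_lt (cancel_pos (show (0:ℚ) < 2*((c:ℚ)+1) by positivity) ?_)
    have he : ((c:ℚ)+2)*b * (2*((c:ℚ)+1)) = b*D := by rw [hD]; ring
    rw [he]
    have hkey : 2*nU ≤ (((c:ℚ)+1)*q + a)*(2*((c:ℚ)+1)) := by
      rw [hnU]
      nlinarith [mul_nonneg (show (0:ℚ) ≤ ((c:ℚ)+1)^2 - c by nlinarith) (show (0:ℚ) ≤ q - 1 by linarith)]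
    linarith
  have g6 : b < a := by
    refine cancel_pos hD0 ?_
    have : 2*nU < a*D := by
      rw [hnU, hD]
      nlinarith [mul_pos (mul_pos (show (0:ℚ) < (c:ℚ)+2 by positivity) hc0)
        (show (0:ℚ) < a - 1 by linarith)]
    linarith
  have hatom : IsAtomOfQ (Mq q) b := atom_of_Icc h1 h2 g1.le g2
  apply not_omega_of_replicate hatom
  · refine ⟨(((c:ℕ)+1:ℕ):ℚ)*b + b - a, ?_, by push_cast; ring⟩
    apply Mq_mem_iff.mpr
    refine Or.inr ⟨c+1, by omega, by push_cast; nlinarith, by push_cast; nlinarith⟩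
  · intro j hj hdvd
    obtain ⟨z, hz, he⟩ := hdvd
    have hz' : z = (j:ℚ)*b - a := by linarith
    subst hz'
    have hjc : (j:ℚ) ≤ (c:ℚ)+1 := by
      have : (j:ℚ) ≤ ((c+1:ℕ):ℚ) := by exact_mod_cast hj
      push_cast at this; linarith
    have hj0 : (0:ℚ) ≤ j := by positivity
    have key1 : (j:ℚ)*b - a < (j:ℚ) - 1 := by
      nlinarith [g3, mul_nonneg (show (0:ℚ) ≤ ((c:ℚ)+1) - j by linarith) (show (0:ℚ) ≤ b - 1 by linarith)]
    have key2 : ((j:ℚ)-2)*q < (j:ℚ)*b - a := by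
      nlinarith [g4, mul_nonneg (show (0:ℚ) ≤ ((c:ℚ)+1) - j by linarith) (show (0:ℚ) ≤ q - b by linarith)]
    rcases Mq_mem_iff.mp hz with h0 | ⟨k, hk1, hkz, hzk⟩
    · -- j*b - a = 0
      rcases Nat.lt_or_ge j 2 with hj2 | hj2
      · interval_cases j
        · simp at h0; linarith
        · simp at h0; linarith
      · have hj2' : (2:ℚ) ≤ j := by exact_mod_cast hj2
        nlinarith [mul_nonneg (show (0:ℚ) ≤ (j:ℚ)-2 by linarith) (show (0:ℚ) ≤ b by linarith)]
    · rcases le_or_gt j (k+1) with h | h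
      · have : (j:ℚ) ≤ (k:ℚ)+1 := by exact_mod_cast h
        have hk1' : (1:ℚ) ≤ k := by exact_mod_cast hk1
        linarith
      · have hkj : (k:ℚ) ≤ (j:ℚ) - 2 := by
          have : (k:ℚ) + 2 ≤ j := by exact_mod_cast h
          linarith
        nlinarith [mul_nonneg (show (0:ℚ) ≤ ((j:ℚ)-2) - k by linarith) (show (0:ℚ) ≤ q by linarith)]

/-- For rational `1 < q < 2` and `c = ⌈1/(q-1)⌉`, every atom `a ∈ [1,q] ∩ ℚ` of `M_q` has
omega-primality exactly `c + ⌈a⌉`; in particular `ω(M_q) = c + 2 < ∞`. -/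
theorem stmt5 (q : ℚ) (h1 : 1 < q) (h2 : q < 2) (c : ℕ) (hc : (c : ℤ) = ⌈1 / (q - 1)⌉) :
    (∀ a : ℚ, 1 ≤ a → a ≤ q →
      OmegaLe (Mq q) a (c + (⌈a⌉).toNat) ∧ ∀ m : ℕ, m < c + (⌈a⌉).toNat → ¬ OmegaLe (Mq q) a m)
    ∧ ((∀ a : ℚ, IsAtomOfQ (Mq q) a → OmegaLe (Mq q) a (c + 2)) ∧
        ∃ a : ℚ, IsAtomOfQ (Mq q) a ∧ ¬ OmegaLe (Mq q) a (c + 1)) := by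
  have hq0 : (0:ℚ) < q - 1 := by linarith
  have hcge : 1/(q-1) ≤ (c:ℚ) := by
    have := Int.le_ceil (1/(q-1))
    rw [← hc] at this
    exact_mod_cast this
  have hclt : (c:ℚ) < 1/(q-1) + 1 := by
    have := Int.ceil_lt_add_one (1/(q-1))
    rw [← hc] at this
    exact_mod_cast this
  have hcq1 : 1 ≤ (c:ℚ) * (q - 1) := by
    rw [div_le_iff₀ hq0] at hcge
    linarith [mul_comm (c:ℚ) (q-1)]
  have hcq2 : (c:ℚ) * (q - 1) < q := by
    have h1q : 1 < 1/(q-1) := by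
      rw [lt_div_iff₀ hq0]; linarith
    rw [div_add' _ _ _ hq0.ne', lt_div_iff₀ hq0] at hclt
    nlinarith
  have hc2 : 2 ≤ c := by
    have h1q : (1:ℚ) < 1/(q-1) := by
      rw [lt_div_iff₀ hq0]; linarith
    by_contra h
    push_neg at h
    interval_cases c <;> norm_num at hcq1 <;> nlinarith
  have main : ∀ a : ℚ, 1 ≤ a → a ≤ q →
      OmegaLe (Mq q) a (c + (⌈a⌉).toNat) ∧
      ∀ m : ℕ, m < c + (⌈a⌉).toNat → ¬ OmegaLe (Mq q) a m := by
    intro a ha1 ha2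
    rcases eq_or_lt_of_le ha1 with rfl | ha1'
    · have hceil : ⌈(1:ℚ)⌉.toNat = 1 := by norm_num
      rw [hceil]
      constructor
      · exact omega_upper h1 hcq1 (by push_cast; linarith)
      · intro m hm hom
        exact not_omega_one h1 h2 hc2 hcq1 hcq2
          (omega_mono (by omega) hom)
    · have hceil : ⌈a⌉ = 2 := by
        have hle : ⌈a⌉ ≤ 2 := Int.ceil_le.mpr (by push_cast; linarith)
        have hlt : 1 < ⌈a⌉ := by
          rw [Int.lt_ceil]; push_cast; exact ha1'
        omega
      have hceil' : ⌈a⌉.toNat = 2 := by rw [hceil]; rfl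
      rw [hceil']
      constructor
      · exact omega_upper h1 hcq1 (by push_cast; linarith)
      · intro m hm hom
        exact not_omega_gt h1 h2 hc2 hcq1 hcq2 ha1' ha2
          (omega_mono (by omega) hom)
  refine ⟨main, ?_, ?_⟩
  · intro a ha
    obtain ⟨ha1, ha2⟩ := Icc_of_atom ha
    have h := (main a ha1 ha2).1
    have hle : ⌈a⌉.toNat ≤ 2 := by
      have : ⌈a⌉ ≤ 2 := Int.ceil_le.mpr (by push_cast; linarith)
      omega
    exact omega_mono (by omega) h
  · refine ⟨q, atom_of_Icc h1 h2 h1.le le_rfl, ?_⟩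
    have hceil : ⌈q⌉ = 2 := by
      have hle : ⌈q⌉ ≤ 2 := Int.ceil_le.mpr (by push_cast; linarith)
      have hlt : 1 < ⌈q⌉ := by rw [Int.lt_ceil]; push_cast; exact h1
      omega
    have := (main q h1.le le_rfl).2 (c+1)
    rw [hceil] at this
    exact this (by omega)
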